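/- Let H be a Hilbert space and (u_n) a sequence in H converging weakly to u. Then there is a subsequence (u_{n_k}) such that the arithmetic means ũ_k = (u_{n_1} + ⋯ + u_{n_k})/k converge strongly to u in H. -/

import Mathlib

open Filter Finset

/-- Banach–Saks theorem in a Hilbert space: if `u_n ⇀ u` weakly, then some subsequence
has Cesàro means converging strongly to `u`. -/
theorem stmt5 {H : Type*} [NormedAddCommGroup H] [InnerProductSpace ℝ H] [CompleteSpace H]
    (u : ℕ → H) (ulim : H)
    (hweak : ∀ f : H →L[ℝ] ℝ, Tendsto (fun n => f (u n)) atTop (nhds (f ulim))) :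
    ∃ φ : ℕ → ℕ, StrictMono φ ∧
      Tendsto (fun k : ℕ => ((k : ℝ) + 1)⁻¹ • ∑ i ∈ Finset.range (k + 1), u (φ i))
        atTop (nhds ulim) := by
  set v : ℕ → H := fun n => u n - ulim with hv
  have hinner : ∀ x : H, Tendsto (fun n => (inner ℝ x (v n) : ℝ)) atTop (nhds 0) := by
    intro x
    have h1 := hweak (innerSL ℝ x)
    have h2 : Tendsto (fun n => (inner ℝ x (u n) : ℝ) - inner ℝ x ulim) atTop
        (nhds ((inner ℝ x ulim : ℝ) - inner ℝ x ulim)) := by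
      simpa using h1.sub_const (inner ℝ x ulim)
    simp only [sub_self] at h2
    convert h2 using 2 with n
    simp [hv, inner_sub_right]
  -- uniform bound
  obtain ⟨C, hC0, hC⟩ : ∃ C : ℝ, 0 ≤ C ∧ ∀ n, ‖v n‖ ≤ C := by
    have hpt : ∀ x : H, ∃ M : ℝ, ∀ n : ℕ, ‖(fun n : ℕ => innerSL ℝ (v n)) n x‖ ≤ M := by
      intro x
      obtain ⟨M, hM⟩ := ((hinner x).abs).bddAbove_range
      refine ⟨M, fun n => ?_⟩
      have := hM ⟨n, rfl⟩
      simpa [real_inner_comm] using this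
    obtain ⟨C, hC⟩ := banach_steinhaus hpt
    refine ⟨max C 0, le_max_right _ _, fun n => ?_⟩
    have := hC n
    rw [innerSL_apply_norm] at this
    exact this.trans (le_max_left _ _)
  -- extraction with small pairwise inner products
  have hext : ∀ s : Finset (ℕ × ℕ), (∀ x ∈ s, True) → ∃ y : ℕ × ℕ, True ∧ ∀ p ∈ s,
      p.2 < y.2 ∧ p.1 < y.1 ∧ |(inner ℝ (v p.1) (v y.1) : ℝ)| ≤ ((y.2 : ℝ) + 1)⁻¹ := by
    intro s _
    set b : ℕ := s.sup Prod.snd + 1 with hb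
    have hpos : (0 : ℝ) < ((b : ℝ) + 1)⁻¹ := by positivity
    have hev : ∀ᶠ n in atTop, ∀ p ∈ s, |(inner ℝ (v p.1) (v n) : ℝ)| ≤ ((b : ℝ) + 1)⁻¹ := by
      rw [eventually_all_finset]
      intro p hp
      have habs : Tendsto (fun n => |(inner ℝ (v p.1) (v n) : ℝ)|) atTop (nhds 0) := by
        simpa using (hinner (v p.1)).abs
      exact (habs.eventually_lt_const hpos).mono fun n hn => hn.le
    have hgt : ∀ᶠ n in atTop, s.sup Prod.fst < n := eventually_gt_atTop _
    obtain ⟨n, hn1, hn2⟩ := (hev.and hgt).exists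
    refine ⟨(n, b), trivial, fun p hp => ⟨?_, ?_, hn1 p hp⟩⟩
    · exact lt_of_le_of_lt (Finset.le_sup hp) (Nat.lt_succ_self _)
    · exact lt_of_le_of_lt (Finset.le_sup hp) hn2
  obtain ⟨f, -, hf⟩ := exists_seq_of_forall_finset_exists (fun _ : ℕ × ℕ => True)
    (fun p q => p.2 < q.2 ∧ p.1 < q.1 ∧ |(inner ℝ (v p.1) (v q.1) : ℝ)| ≤ ((q.2 : ℝ) + 1)⁻¹) hext
  set φ : ℕ → ℕ := fun n => (f n).1 with hφ
  set ψ : ℕ → ℕ := fun n => (f n).2 with hψ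
  have hφmono : StrictMono φ := fun m n h => (hf m n h).2.1
  have hψmono : StrictMono ψ := fun m n h => (hf m n h).1
  have hsmall : ∀ i j : ℕ, i < j → |(inner ℝ (v (φ i)) (v (φ j)) : ℝ)| ≤ ((j : ℝ) + 1)⁻¹ := by
    intro i j hij
    have h1 := (hf i j hij).2.2
    have hj : (j : ℝ) ≤ (ψ j : ℝ) := Nat.cast_le.2 hψmono.le_apply
    exact h1.trans (inv_anti₀ (by positivity) (by linarith))
  refine ⟨φ, hφmono, ?_⟩
  -- key sum estimate by induction
  have hsum : ∀ K : ℕ, ‖∑ i ∈ range K, v (φ i)‖ ^ 2 ≤ K * (C ^ 2 + 2) := by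
    intro K
    induction K with
    | zero => simp
    | succ K ih =>
      rw [Finset.sum_range_succ, norm_add_sq_real]
      have h1 : (inner ℝ (∑ i ∈ range K, v (φ i)) (v (φ K)) : ℝ) ≤ 1 := by
        rw [sum_inner]
        calc ∑ i ∈ range K, (inner ℝ (v (φ i)) (v (φ K)) : ℝ)
            ≤ ∑ _i ∈ range K, ((K : ℝ) + 1)⁻¹ :=
              Finset.sum_le_sum fun i hi => le_of_abs_le (hsmall i K (mem_range.1 hi))
          _ = (K : ℝ) * ((K : ℝ) + 1)⁻¹ := by
              rw [Finset.sum_const, card_range, nsmul_eq_mul]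
          _ ≤ 1 := by
              rw [← div_eq_mul_inv]
              exact div_le_one_of_le₀ (by linarith) (by positivity)
      have h2 : ‖v (φ K)‖ ^ 2 ≤ C ^ 2 := by
        have := hC (φ K)
        nlinarith [norm_nonneg (v (φ K))]
      push_cast
      nlinarith
  -- rewrite means in terms of v
  have hmean : ∀ k : ℕ, ((k : ℝ) + 1)⁻¹ • ∑ i ∈ Finset.range (k + 1), u (φ i)
      = (((k : ℝ) + 1)⁻¹ • ∑ i ∈ Finset.range (k + 1), v (φ i)) + ulim := by
    intro k
    have hne : ((k : ℝ) + 1) ≠ 0 := by positivity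
    have hns : ((k + 1 : ℕ)) • ulim = ((k : ℝ) + 1) • ulim := by
      rw [← Nat.cast_smul_eq_nsmul ℝ]
      norm_num
    have : ∑ i ∈ Finset.range (k + 1), u (φ i)
        = (∑ i ∈ Finset.range (k + 1), v (φ i)) + ((k : ℝ) + 1) • ulim := by
      calc ∑ i ∈ Finset.range (k + 1), u (φ i)
          = ∑ i ∈ Finset.range (k + 1), (v (φ i) + ulim) := by simp [hv]
        _ = (∑ i ∈ Finset.range (k + 1), v (φ i)) + (k + 1 : ℕ) • ulim := by
            rw [Finset.sum_add_distrib, Finset.sum_const, card_range]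
        _ = _ := by rw [hns]
    rw [this, smul_add, smul_smul, inv_mul_cancel₀ hne, one_smul]
  have hzero : Tendsto (fun k : ℕ => ((k : ℝ) + 1)⁻¹ • ∑ i ∈ Finset.range (k + 1), v (φ i))
      atTop (nhds 0) := by
    have hbound : ∀ k : ℕ, ‖((k : ℝ) + 1)⁻¹ • ∑ i ∈ Finset.range (k + 1), v (φ i)‖
        ≤ Real.sqrt ((C ^ 2 + 2) * ((k : ℝ) + 1)⁻¹) := by
      intro k
      rw [norm_smul]
      have hk : (0 : ℝ) < (k : ℝ) + 1 := by positivity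
      rw [Real.norm_eq_abs, abs_of_pos (inv_pos.2 hk)]
      have hsq : (((k : ℝ) + 1)⁻¹ * ‖∑ i ∈ Finset.range (k + 1), v (φ i)‖) ^ 2
          ≤ (C ^ 2 + 2) * ((k : ℝ) + 1)⁻¹ := by
        have h := hsum (k + 1)
        push_cast at h
        have hn : (0 : ℝ) ≤ ‖∑ i ∈ Finset.range (k + 1), v (φ i)‖ := norm_nonneg _
        rw [mul_pow]
        calc (((k : ℝ) + 1)⁻¹) ^ 2 * ‖∑ i ∈ Finset.range (k + 1), v (φ i)‖ ^ 2
            ≤ (((k : ℝ) + 1)⁻¹) ^ 2 * (((k : ℝ) + 1) * (C ^ 2 + 2)) := by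
              apply mul_le_mul_of_nonneg_left _ (by positivity)
              linarith
          _ = (C ^ 2 + 2) * ((k : ℝ) + 1)⁻¹ := by
              field_simp
      exact (Real.le_sqrt (by positivity) (by positivity)).2 hsq
    have h0 : Tendsto (fun k : ℕ => (C ^ 2 + 2) * ((k : ℝ) + 1)⁻¹) atTop (nhds 0) := by
      have := tendsto_one_div_add_atTop_nhds_zero_nat (𝕜 := ℝ)
      have h' := this.const_mul (C ^ 2 + 2)
      simpa [one_div, mul_comm] using h'
    have hsqrt : Tendsto (fun k : ℕ => Real.sqrt ((C ^ 2 + 2) * ((k : ℝ) + 1)⁻¹)) atTop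
        (nhds 0) := by
      have := (Real.continuous_sqrt.tendsto' 0 0 (by simp)).comp h0
      exact this
    rw [tendsto_zero_iff_norm_tendsto_zero]
    exact squeeze_zero (fun k => norm_nonneg _) hbound hsqrt
  have := hzero.add_const ulim
  simp only [zero_add] at this
  exact this.congr fun k => (hmean k).symm
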